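/- In the general (signed) case, τ(A_{ij}) = (ω^{-i(1+j)}/N) Σ_{k,l∈ℤ_N} θ_k θ_{k+j} ω^{-k(i+l)} A_{lj}, where τ(E_{ij}) = θ_i θ_j E_{N-1-j,N-1-i} and it is assumed θ_{N-1-k} θ_{N-1-k-j} = θ_k θ_{k+j} for all k,j. -/

import Mathlib

open Matrix BigOperators

/-- `ω = exp(2πi/N)`, a primitive N-th root of unity. -/
noncomputable def omegaN (N : ℕ) : ℂ := Complex.exp (2 * Real.pi * Complex.I / N)

/-- `ω^m` for `m ∈ ℤ/N` (well defined since `ω^N = 1`). -/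
noncomputable def wpow (N : ℕ) (m : ZMod N) : ℂ := omegaN N ^ m.val

/-- Matrix unit `E_{a b}` in `Mat_N(ℂ)` with indices in `ℤ/N`. -/
def EU (N : ℕ) [NeZero N] (a b : ZMod N) : Matrix (ZMod N) (ZMod N) ℂ :=
  Matrix.single a b 1

/-- Principal basis element `A_{i j} = Σ_k ω^{k i} E_{k, k+j}`. -/
noncomputable def Apr (N : ℕ) [NeZero N] (i j : ZMod N) : Matrix (ZMod N) (ZMod N) ℂ :=
  ∑ k : ZMod N, wpow N (k * i) • EU N k (k + j)

/-- The signed transposition `τ(E_{ij}) = θ_i θ_j E_{N-1-j, N-1-i}` (indices mod `N`). -/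
def tauM (N : ℕ) (θ : ZMod N → ℂ) (X : Matrix (ZMod N) (ZMod N) ℂ) :
    Matrix (ZMod N) (ZMod N) ℂ :=
  Matrix.of fun a b => θ (-1 - b) * θ (-1 - a) * X (-1 - b) (-1 - a)

lemma omegaN_pow_N (N : ℕ) [NeZero N] : omegaN N ^ N = 1 :=
  (Complex.isPrimitiveRoot_exp N (NeZero.ne N)).pow_eq_one

lemma wpow_natCast (N : ℕ) [NeZero N] (m : ℕ) : wpow N (m : ZMod N) = omegaN N ^ m := by
  have h := Nat.div_add_mod m N
  conv_rhs => rw [← h]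
  rw [pow_add, pow_mul, omegaN_pow_N, one_pow, one_mul, wpow, ZMod.val_natCast]

lemma wpow_add (N : ℕ) [NeZero N] (x y : ZMod N) : wpow N (x + y) = wpow N x * wpow N y := by
  have h : x + y = ((x.val + y.val : ℕ) : ZMod N) := by
    push_cast [ZMod.natCast_val, ZMod.cast_id]; ring
  rw [h, wpow_natCast, pow_add, wpow, wpow]

lemma sum_wpow (N : ℕ) [NeZero N] (c : ZMod N) :
    ∑ l : ZMod N, wpow N (l * c) = if c = 0 then (N : ℂ) else 0 := by
  have key : ∀ l : ZMod N, wpow N (l * c) = (omegaN N ^ c.val) ^ l.val := by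
    intro l
    have h : l * c = ((l.val * c.val : ℕ) : ZMod N) := by
      push_cast [ZMod.natCast_val, ZMod.cast_id]; ring
    rw [h, wpow_natCast, pow_mul']
  simp only [key]
  rw [Finset.sum_nbij' (i := fun l : ZMod N => l.val) (j := fun m : ℕ => (m : ZMod N))
    (t := Finset.range N) (g := fun m => (omegaN N ^ c.val) ^ m)
    (fun l _ => Finset.mem_range.mpr (ZMod.val_lt l))
    (fun m _ => Finset.mem_univ _)
    (fun l _ => by simp [ZMod.natCast_val, ZMod.cast_id])
    (fun m hm => ZMod.val_natCast_of_lt (Finset.mem_range.mp hm))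
    (fun l _ => rfl)]
  split_ifs with hc
  · simp [hc]
  · have hz : omegaN N ^ c.val ≠ 1 := by
      intro h1
      have hd := ((Complex.isPrimitiveRoot_exp N (NeZero.ne N)).pow_eq_one_iff_dvd c.val).mp h1
      have hlt := ZMod.val_lt c
      have hne : c.val ≠ 0 := fun h0 => hc (by rwa [← ZMod.val_eq_zero])
      exact absurd (Nat.le_of_dvd (Nat.pos_of_ne_zero hne) hd) (by omega)
    rw [geom_sum_eq hz, ← pow_mul, mul_comm, pow_mul, omegaN_pow_N, one_pow, sub_self, zero_div]

lemma Apr_apply (N : ℕ) [NeZero N] (i j a b : ZMod N) :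
    Apr N i j a b = if b = a + j then wpow N (a * i) else 0 := by
  simp only [Apr, EU, Matrix.sum_apply, Matrix.smul_apply, Matrix.single, Matrix.of_apply,
    smul_eq_mul]
  rw [Finset.sum_eq_single a]
  · by_cases h : b = a + j <;> simp [h, eq_comm]
  · intro k _ hk; simp [hk]
  · simp

/-- In the general signed case,
`τ(A_{ij}) = (ω^{-i(1+j)}/N) Σ_{k,l} θ_k θ_{k+j} ω^{-k(i+l)} A_{lj}`,
assuming `θ_{N-1-k} θ_{N-1-k-j} = θ_k θ_{k+j}`. -/
theorem tau_principal_signed (N : ℕ) [NeZero N] (θ : ZMod N → ℂ)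
    (hθ : ∀ i, θ i = 1 ∨ θ i = -1)
    (hsym : ∀ k j : ZMod N, θ (-1 - k) * θ (-1 - k - j) = θ k * θ (k + j))
    (i j : ZMod N) :
    tauM N θ (Apr N i j) =
      (wpow N (-(i * (1 + j))) / N) •
        ∑ k : ZMod N, ∑ l : ZMod N,
          (θ k * θ (k + j) * wpow N (-(k * (i + l)))) • Apr N l j := by
  ext a b
  simp only [tauM, Matrix.of_apply, Matrix.smul_apply, Matrix.sum_apply, Apr_apply, smul_eq_mul]
  by_cases hab : b = a + j
  · subst hab
    rw [if_pos (by ring : (-1 - a : ZMod N) = -1 - (a + j) + j)]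
    have hN : (N : ℂ) ≠ 0 := Nat.cast_ne_zero.mpr (NeZero.ne N)
    have hRHS : ∀ k : ZMod N,
        (∑ l : ZMod N, θ k * θ (k + j) * wpow N (-(k * (i + l))) *
          (if a + j = a + j then wpow N (a * l) else 0))
        = θ k * θ (k + j) * wpow N (-(k * i)) * (if a - k = 0 then (N : ℂ) else 0) := by
      intro k
      have hterm : ∀ l : ZMod N, wpow N (-(k * (i + l))) * wpow N (a * l)
          = wpow N (-(k * i)) * wpow N (l * (a - k)) := by
        intro l
        rw [← wpow_add, ← wpow_add]; congr 1; ring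
      calc (∑ l : ZMod N, θ k * θ (k + j) * wpow N (-(k * (i + l))) *
              (if a + j = a + j then wpow N (a * l) else 0))
          = ∑ l : ZMod N, θ k * θ (k + j) * wpow N (-(k * i)) * wpow N (l * (a - k)) := by
            refine Finset.sum_congr rfl fun l _ => ?_
            rw [if_pos rfl, mul_assoc, hterm l, ← mul_assoc]
        _ = θ k * θ (k + j) * wpow N (-(k * i)) * ∑ l : ZMod N, wpow N (l * (a - k)) := by
            rw [← Finset.mul_sum]
        _ = _ := by rw [sum_wpow]
    have houter : (∑ k : ZMod N, ∑ l : ZMod N, θ k * θ (k + j) * wpow N (-(k * (i + l))) *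
          (if a + j = a + j then wpow N (a * l) else 0))
        = θ a * θ (a + j) * wpow N (-(a * i)) * N := by
      rw [Finset.sum_congr rfl fun k _ => hRHS k, Finset.sum_eq_single a]
      · rw [sub_self, if_pos rfl]
      · intro k _ hk
        rw [if_neg (fun h => hk (by linear_combination -h)), mul_zero]
      · simp
    rw [houter]
    have hθ2 : θ (-1 - (a + j)) * θ (-1 - a) = θ a * θ (a + j) := by
      rw [show (-1 - (a + j) : ZMod N) = -1 - a - j by ring, mul_comm]
      exact hsym a j
    have hw : wpow N ((-1 - (a + j)) * i) = wpow N (-(i * (1 + j))) * wpow N (-(a * i)) := by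
      rw [← wpow_add]; congr 1; ring
    rw [hθ2, hw]
    field_simp
  · rw [if_neg (fun h => hab (by linear_combination h)), mul_zero]
    simp [hab]
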